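/- Let t(h,k) = ∑_{μ=0}^{k-1} μ⌊hμ/k⌋. For any positive integers h, k, q, with d = gcd(h,k), one has t(qh, qk) = q·t(h,k) + (1/12)·k·q·(q−1)·(4hk(q+1) − 6h − 3(k−1) + 3(d−1)). -/

import Mathlib

/-- `t(h,k) = ∑_{μ=0}^{k-1} μ ⌊hμ/k⌋`. -/
def tSum (h k : ℕ) : ℕ := ∑ μ ∈ Finset.range k, μ * (h * μ / k)

/- Auxiliary lemmas -/

lemma sumQ (n : ℕ) : (∑ i ∈ Finset.range n, (i : ℚ)) = n * ((n : ℚ) - 1) / 2 := by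
  induction n with
  | zero => simp
  | succ m ih => rw [Finset.sum_range_succ, ih]; push_cast; ring

lemma sumSqQ (n : ℕ) : (∑ i ∈ Finset.range n, (i : ℚ) ^ 2)
    = n * ((n : ℚ) - 1) * (2 * (n : ℚ) - 1) / 6 := by
  induction n with
  | zero => simp
  | succ m ih => rw [Finset.sum_range_succ, ih]; push_cast; ring

lemma card_dvd_filter (m d : ℕ) (hm : 0 < m) :
    ((Finset.range (d * m)).filter (m ∣ ·)).card = d := by
  have himg : (Finset.range (d * m)).filter (m ∣ ·) = (Finset.range d).image (· * m) := by
    ext x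
    simp only [Finset.mem_filter, Finset.mem_range, Finset.mem_image]
    constructor
    · rintro ⟨hx, c, rfl⟩
      refine ⟨c, ?_, mul_comm c m⟩
      rw [mul_comm] at hx
      exact Nat.lt_of_mul_lt_mul_right hx
    · rintro ⟨c, hc, rfl⟩
      exact ⟨(Nat.mul_lt_mul_right hm).mpr hc, dvd_mul_left m c⟩
  rw [himg, Finset.card_image_of_injective _ (fun a b hab => Nat.eq_of_mul_eq_mul_right hm hab),
    Finset.card_range]

lemma mul_div_comm_of_dvd (d h k : ℕ) (hd0 : 0 < d) (hdh : d ∣ h) (hdk : d ∣ k) :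
    h * (k / d) = h / d * k := by
  rcases hdh with ⟨h', rfl⟩
  rcases hdk with ⟨k', rfl⟩
  rw [Nat.mul_div_cancel_left _ hd0, Nat.mul_div_cancel_left _ hd0]
  ring

lemma dvd_iff_div_gcd_dvd (h k r : ℕ) (hk : 0 < k) :
    k ∣ h * r ↔ (k / Nat.gcd h k) ∣ r := by
  set d := Nat.gcd h k with hd
  have hd0 : 0 < d := Nat.gcd_pos_of_pos_right _ hk
  have hdh : d ∣ h := Nat.gcd_dvd_left _ _
  have hdk : d ∣ k := Nat.gcd_dvd_right _ _
  have cop : Nat.Coprime (k / d) (h / d) := (Nat.coprime_div_gcd_div_gcd hd0).symm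
  constructor
  · rintro ⟨m, hm⟩
    have h1 : (h / d) * r = (k / d) * m := by
      apply Nat.eq_of_mul_eq_mul_left hd0
      rw [← mul_assoc, ← mul_assoc, Nat.mul_div_cancel' hdh, Nat.mul_div_cancel' hdk, hm]
    exact cop.dvd_of_dvd_mul_left ⟨m, by rw [← h1, mul_comm]⟩
  · rintro ⟨m, rfl⟩
    have h2 : h * (k / d) = h / d * k := mul_div_comm_of_dvd d h k hd0 hdh hdk
    rw [← mul_assoc, h2]
    exact (dvd_mul_left k (h / d)).mul_right m

lemma card_dvd_mul_filter (h k : ℕ) (hk : 0 < k) :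
    ((Finset.range k).filter (fun r => k ∣ h * r)).card = Nat.gcd h k := by
  set d := Nat.gcd h k with hd
  have hd0 : 0 < d := Nat.gcd_pos_of_pos_right _ hk
  have hdk : d ∣ k := Nat.gcd_dvd_right _ _
  have hm0 : 0 < k / d := Nat.div_pos (Nat.le_of_dvd hk hdk) hd0
  have hfe : (Finset.range k).filter (fun r => k ∣ h * r)
      = (Finset.range (d * (k / d))).filter ((k / d) ∣ ·) := by
    rw [Nat.mul_div_cancel' hdk]
    exact Finset.filter_congr (fun r hr => by
      simpa using dvd_iff_div_gcd_dvd h k r hk)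
  rw [hfe, card_dvd_filter _ _ hm0]

lemma mod_pair (h k r : ℕ) (hk : 0 < k) (hr : r < k) :
    h * r % k + h * (k - r) % k = if k ∣ h * r then 0 else k := by
  have hmul : h * (k - r) = h * k - h * r := Nat.mul_sub h k r
  by_cases hdvd : k ∣ h * r
  · rw [if_pos hdvd, Nat.mod_eq_zero_of_dvd hdvd, hmul,
      Nat.mod_eq_zero_of_dvd (Nat.dvd_sub (dvd_mul_left k h) hdvd)]
  · rw [if_neg hdvd]
    set b := h * r / k with hb
    set s := h * r % k with hs
    have h1 : k * b + s = h * r := Nat.div_add_mod _ _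
    have hsk : s < k := Nat.mod_lt _ hk
    have hs0 : 0 < s := Nat.pos_of_ne_zero (fun h0 => hdvd (Nat.dvd_of_mod_eq_zero h0))
    have hh0 : 0 < h := by
      rcases Nat.eq_zero_or_pos h with h0 | h0
      · exact absurd (by simp [h0]) hdvd
      · exact h0
    have hhr : h * r < k * h := by
      rw [mul_comm k h]
      exact (Nat.mul_lt_mul_left hh0).mpr hr
    have hbh : b < h := Nat.div_lt_of_lt_mul hhr
    have key : h * k - h * r = k * (h - b - 1) + (k - s) := by
      have h1' : (k : ℤ) * b + s = h * r := by exact_mod_cast h1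
      zify [le_of_lt hsk, show h * r ≤ h * k by nlinarith, show b ≤ h from hbh.le,
        show 1 ≤ h - b by omega]
      linear_combination h1'
    rw [hmul, key, Nat.mul_add_mod, Nat.mod_eq_of_lt (by omega)]
    omega

lemma two_mod_sum (h k : ℕ) (hk : 0 < k) :
    2 * (∑ r ∈ Finset.range k, h * r % k) + k * Nat.gcd h k = k * k := by
  set f : ℕ → ℕ := fun r => h * r % k with hf
  have hshift : ∑ r ∈ Finset.range k, f (r + 1) = ∑ r ∈ Finset.range k, f r := by
    have h1 : ∑ r ∈ Finset.range (k + 1), f r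
        = ∑ r ∈ Finset.range k, f (r + 1) + f 0 := Finset.sum_range_succ' f k
    have h2 : ∑ r ∈ Finset.range (k + 1), f r
        = ∑ r ∈ Finset.range k, f r + f k := Finset.sum_range_succ f k
    have hf0 : f 0 = 0 := by simp [hf]
    have hfk : f k = 0 := by simp [hf, Nat.mul_mod_left]
    omega
  have hrefl : ∑ r ∈ Finset.range k, f (k - r) = ∑ r ∈ Finset.range k, f r := by
    calc ∑ r ∈ Finset.range k, f (k - r)
        = ∑ r ∈ Finset.range k, f ((k - 1 - r) + 1) := by
          apply Finset.sum_congr rfl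
          intro r hr
          rw [Finset.mem_range] at hr
          congr 1
          omega
      _ = ∑ r ∈ Finset.range k, f (r + 1) := Finset.sum_range_reflect (fun j => f (j + 1)) k
      _ = ∑ r ∈ Finset.range k, f r := hshift
  have hsum : 2 * (∑ r ∈ Finset.range k, f r)
      = ∑ r ∈ Finset.range k, (if k ∣ h * r then 0 else k) := by
    rw [two_mul]
    nth_rewrite 2 [← hrefl]
    rw [← Finset.sum_add_distrib]
    apply Finset.sum_congr rfl
    intro r hr
    rw [Finset.mem_range] at hr
    exact mod_pair h k r hk hr
  rw [hsum]
  rw [Finset.sum_ite, Finset.sum_const, Finset.sum_const, smul_zero, zero_add, smul_eq_mul]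
  have hcard : ((Finset.range k).filter (fun r => k ∣ h * r)).card = Nat.gcd h k :=
    card_dvd_mul_filter h k hk
  have hcards : ((Finset.range k).filter (fun r => ¬ k ∣ h * r)).card
      + ((Finset.range k).filter (fun r => k ∣ h * r)).card = k := by
    rw [add_comm, Finset.card_filter_add_card_filter_not (p := fun r => k ∣ h * r),
      Finset.card_range]
  calc ((Finset.range k).filter (fun r => ¬ k ∣ h * r)).card * k + k * Nat.gcd h k
      = k * (((Finset.range k).filter (fun r => ¬ k ∣ h * r)).card
          + ((Finset.range k).filter (fun r => k ∣ h * r)).card) := by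
        rw [hcard]; ring
    _ = k * k := by rw [hcards]

lemma T_val (h k : ℕ) (hk : 0 < k) :
    (∑ r ∈ Finset.range k, ((h * r / k : ℕ) : ℚ))
      = ((h : ℚ) * k - h - k + Nat.gcd h k) / 2 := by
  have hk' : (k : ℚ) ≠ 0 := Nat.cast_ne_zero.mpr hk.ne'
  have e1n : ∑ r ∈ Finset.range k, (k * (h * r / k) + h * r % k)
      = ∑ r ∈ Finset.range k, (h * r) :=
    Finset.sum_congr rfl (fun r _ => Nat.div_add_mod _ _)
  have e1 : (k : ℚ) * (∑ r ∈ Finset.range k, ((h * r / k : ℕ) : ℚ))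
      + (∑ r ∈ Finset.range k, ((h * r % k : ℕ) : ℚ))
      = h * (∑ r ∈ Finset.range k, (r : ℚ)) := by
    have h0 := congrArg (fun x : ℕ => (x : ℚ)) e1n
    push_cast at h0
    rw [Finset.sum_add_distrib, ← Finset.mul_sum, ← Finset.mul_sum] at h0
    exact h0
  have e2 : (∑ r ∈ Finset.range k, (r : ℚ)) = k * ((k : ℚ) - 1) / 2 := sumQ k
  have e3 : 2 * (∑ r ∈ Finset.range k, ((h * r % k : ℕ) : ℚ))
      + k * (Nat.gcd h k : ℚ) = k * k := by
    have h0 := congrArg (fun x : ℕ => (x : ℚ)) (two_mod_sum h k hk)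
    push_cast at h0
    linarith [h0]
  rw [e2] at e1
  rw [eq_div_iff (two_ne_zero)]
  apply mul_left_cancel₀ hk'
  linear_combination 2 * e1 - e3

lemma tSum_split (h k q : ℕ) (hk : 0 < k) (hq : 0 < q) :
    tSum (q * h) (q * k)
      = ∑ a ∈ Finset.range q, ∑ r ∈ Finset.range k, (a * k + r) * (h * a + h * r / k) := by
  unfold tSum
  have hdiv : ∀ μ, q * h * μ / (q * k) = h * μ / k := by
    intro μ
    rw [mul_assoc, Nat.mul_div_mul_left _ _ hq]
  simp only [hdiv]
  have key : ∀ n : ℕ, ∑ μ ∈ Finset.range (n * k), μ * (h * μ / k)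
      = ∑ a ∈ Finset.range n, ∑ r ∈ Finset.range k, (a * k + r) * (h * a + h * r / k) := by
    intro n
    induction n with
    | zero => simp
    | succ m ih =>
      rw [Finset.sum_range_succ, ← ih, Nat.succ_mul, Finset.sum_range_add]
      congr 1
      apply Finset.sum_congr rfl
      intro r _
      have hdd : h * (m * k + r) / k = h * m + h * r / k := by
        rw [Nat.mul_add, add_comm, ← mul_assoc, Nat.add_mul_div_right _ _ hk, add_comm]
      rw [hdd]
  exact key q

theorem tSum_scaling (h k q : ℕ) (hh : 0 < h) (hk : 0 < k) (hq : 0 < q) :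
    (tSum (q * h) (q * k) : ℚ)
      = q * tSum h k + (1 / 12) * k * q * ((q : ℚ) - 1) *
          (4 * h * k * ((q : ℚ) + 1) - 6 * h - 3 * ((k : ℚ) - 1)
            + 3 * ((Nat.gcd h k : ℚ) - 1)) := by
  have hsplit := tSum_split h k q hk hq
  have hcast : (tSum (q * h) (q * k) : ℚ)
      = ∑ a ∈ Finset.range q, ∑ r ∈ Finset.range k,
          (((a : ℚ) * k + r) * ((h : ℚ) * a + ((h * r / k : ℕ) : ℚ))) := by
    rw [hsplit]
    push_cast
    rfl
  have hk' : (k : ℚ) ≠ 0 := Nat.cast_ne_zero.mpr hk.ne'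
  have ht : (∑ r ∈ Finset.range k, (r : ℚ) * ((h * r / k : ℕ) : ℚ)) = (tSum h k : ℚ) := by
    unfold tSum
    push_cast
    rfl
  have inner : ∀ a : ℕ, (∑ r ∈ Finset.range k,
        (((a : ℚ) * k + r) * ((h : ℚ) * a + ((h * r / k : ℕ) : ℚ))))
      = (h : ℚ) * k * k * (a : ℚ) ^ 2
        + ((k : ℚ) * (((h : ℚ) * k - h - k + (Nat.gcd h k : ℚ)) / 2)
            + (h : ℚ) * ((k : ℚ) * ((k : ℚ) - 1) / 2)) * (a : ℚ)
        + (tSum h k : ℚ) := by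
    intro a
    calc (∑ r ∈ Finset.range k,
          (((a : ℚ) * k + r) * ((h : ℚ) * a + ((h * r / k : ℕ) : ℚ))))
        = ∑ r ∈ Finset.range k,
            ((h : ℚ) * k * (a : ℚ) ^ 2 + ((a : ℚ) * k) * ((h * r / k : ℕ) : ℚ)
              + ((h : ℚ) * (a : ℚ)) * (r : ℚ) + (r : ℚ) * ((h * r / k : ℕ) : ℚ)) :=
          Finset.sum_congr rfl (fun r _ => by ring)
      _ = _ := by
          rw [Finset.sum_add_distrib, Finset.sum_add_distrib, Finset.sum_add_distrib,
            Finset.sum_const, Finset.card_range, ← Finset.mul_sum, ← Finset.mul_sum,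
            T_val h k hk, sumQ k, ht, nsmul_eq_mul]
          ring
  rw [hcast, Finset.sum_congr rfl (fun a _ => inner a), Finset.sum_add_distrib,
    Finset.sum_add_distrib, ← Finset.mul_sum, ← Finset.mul_sum, Finset.sum_const,
    Finset.card_range, nsmul_eq_mul, sumQ q, sumSqQ q]
  field_simp
  ring
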